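/- Let 𝒴 be a finite nonempty set, p_d a probability distribution on 𝒴, p a probability distribution on 𝒴, and suppose p_d(y) + p(y) > 0 for all y ∈ 𝒴. Define D*(y) = p_d(y)/(p_d(y)+p(y)). Then D* maximizes the functional V(D) = Σ_y p_d(y)·log D(y) + Σ_y p(y)·log(1 − D(y)) over all functions D : 𝒴 → [0,1]; that is, for every D : 𝒴 → [0,1], V(D) ≤ V(D*), with the conventions 0·log 0 = 0 and p·log 0 = −∞ for p > 0. -/

import Mathlib

open Finset

/-- One term `w·log d` of the discriminator objective, valued in `EReal`, with
the conventions `0·log 0 = 0` and `w·log 0 = −∞` for `w > 0`. -/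
noncomputable def ganLogTerm (w d : ℝ) : EReal :=
  if w = 0 then 0 else if d = 0 then ⊥ else ((w * Real.log d : ℝ) : EReal)

/-- The GAN discriminator objective
`V(D) = ∑_y p_d(y)·log D(y) + ∑_y p(y)·log(1 − D(y))`, valued in `EReal`. -/
noncomputable def ganObjective {Y : Type*} [Fintype Y] (pd p D : Y → ℝ) : EReal :=
  (∑ y, ganLogTerm (pd y) (D y)) + (∑ y, ganLogTerm (p y) (1 - D y))

lemma ganLogTerm_nonpos (w d : ℝ) (hw : 0 ≤ w) (hd0 : 0 ≤ d) (hd : d ≤ 1) :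
    ganLogTerm w d ≤ 0 := by
  unfold ganLogTerm
  split_ifs with h1 h2
  · exact le_rfl
  · exact bot_le
  · have : w * Real.log d ≤ 0 :=
      mul_nonpos_of_nonneg_of_nonpos hw (Real.log_nonpos hd0 hd)
    exact_mod_cast this

/-- Pointwise key lemma. -/
lemma ganLogTerm_key (a b d : ℝ) (ha : 0 ≤ a) (hb : 0 ≤ b) (hs : 0 < a + b)
    (hd0 : 0 ≤ d) (hd1 : d ≤ 1) :
    ganLogTerm a d + ganLogTerm b (1 - d) ≤
      ganLogTerm a (a / (a + b)) + ganLogTerm b (1 - a / (a + b)) := by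
  have hs' : a + b ≠ 0 := hs.ne'
  have hbs : (1 : ℝ) - a / (a + b) = b / (a + b) := by field_simp; ring
  rcases eq_or_lt_of_le ha with ha0 | ha0
  · -- a = 0
    have hbpos : 0 < b := by linarith [hs, ha0]
    have h1 : ganLogTerm a d = 0 := by simp [ganLogTerm, ← ha0]
    have h2 : ganLogTerm a (a / (a + b)) = 0 := by simp [ganLogTerm, ← ha0]
    have h3 : ganLogTerm b (1 - a / (a + b)) = 0 := by
      have h : (1:ℝ) - a / (a + b) = 1 := by rw [← ha0]; simp
      simp [ganLogTerm, h]
    rw [h1, h2, h3, zero_add, zero_add]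
    exact ganLogTerm_nonpos b (1 - d) hb (by linarith) (by linarith)
  rcases eq_or_lt_of_le hb with hb0 | hb0
  · -- b = 0
    have h1 : ganLogTerm b (1 - d) = 0 := by simp [ganLogTerm, ← hb0]
    have h2 : ganLogTerm b (1 - a / (a + b)) = 0 := by simp [ganLogTerm, ← hb0]
    have h3 : ganLogTerm a (a / (a + b)) = 0 := by
      have h : a / (a + b) = 1 := by rw [← hb0, add_zero, div_self ha0.ne']
      simp [ganLogTerm, h]
    rw [h1, h2, h3, add_zero, add_zero]
    exact ganLogTerm_nonpos a d ha hd0 hd1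
  · -- a > 0, b > 0
    have has : 0 < a / (a + b) := div_pos ha0 hs
    have hbs' : 0 < b / (a + b) := div_pos hb0 hs
    have hR : ganLogTerm a (a / (a + b)) + ganLogTerm b (1 - a / (a + b)) =
        ((a * Real.log (a / (a + b)) + b * Real.log (b / (a + b)) : ℝ) : EReal) := by
      rw [hbs]
      simp only [ganLogTerm, ha0.ne', hb0.ne', has.ne', hbs'.ne', if_false]
      exact (EReal.coe_add _ _).symm
    rcases eq_or_lt_of_le hd0 with hd0' | hd0'
    · -- d = 0 : LHS has ⊥
      have : ganLogTerm a d = ⊥ := by simp [ganLogTerm, ha0.ne', ← hd0']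
      rw [this]
      rw [EReal.bot_add]
      exact bot_le
    rcases eq_or_lt_of_le hd1 with hd1' | hd1'
    · -- d = 1
      have : ganLogTerm b (1 - d) = ⊥ := by simp [ganLogTerm, hb0.ne', hd1']
      rw [this, EReal.add_bot]
      exact bot_le
    · -- 0 < d < 1, real inequality
      have h1d : 0 < 1 - d := by linarith
      have hL : ganLogTerm a d + ganLogTerm b (1 - d) =
          ((a * Real.log d + b * Real.log (1 - d) : ℝ) : EReal) := by
        simp only [ganLogTerm, ha0.ne', hb0.ne', hd0'.ne', h1d.ne', if_false]
        exact (EReal.coe_add _ _).symm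
      rw [hL, hR, EReal.coe_le_coe_iff]
      -- Gibbs inequality
      have key1 : Real.log d - Real.log (a / (a + b)) ≤ d * (a + b) / a - 1 := by
        rw [← Real.log_div hd0'.ne' has.ne']
        have h : d / (a / (a + b)) = d * (a + b) / a := by
          rw [div_div_eq_mul_div]
        rw [h]
        exact Real.log_le_sub_one_of_pos (by positivity)
      have key2 : Real.log (1 - d) - Real.log (b / (a + b)) ≤ (1 - d) * (a + b) / b - 1 := by
        rw [← Real.log_div h1d.ne' hbs'.ne']
        have h : (1 - d) / (b / (a + b)) = (1 - d) * (a + b) / b := by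
          rw [div_div_eq_mul_div]
        rw [h]
        exact Real.log_le_sub_one_of_pos (by positivity)
      have e1 : a * (d * (a + b) / a - 1) = d * (a + b) - a := by field_simp
      have e2 : b * ((1 - d) * (a + b) / b - 1) = (1 - d) * (a + b) - b := by field_simp
      nlinarith [mul_le_mul_of_nonneg_left key1 ha0.le,
        mul_le_mul_of_nonneg_left key2 hb0.le]

/-- The optimal-discriminator property (line 3 of Algorithm 1 of the paper):
`D*(y) = p_d(y)/(p_d(y)+p(y))` maximizes
`V(D) = ∑_y p_d(y)·log D(y) + ∑_y p(y)·log(1 − D(y))` over all `D : 𝒴 → [0,1]`. -/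
theorem gcn_optimal_discriminator {Y : Type*} [Fintype Y] [Nonempty Y]
    (pd p : Y → ℝ)
    (hpd_nonneg : ∀ y, 0 ≤ pd y) (hpd_sum : ∑ y, pd y = 1)
    (hp_nonneg : ∀ y, 0 ≤ p y) (hp_sum : ∑ y, p y = 1)
    (hpos : ∀ y, 0 < pd y + p y) :
    ∀ D : Y → ℝ, (∀ y, D y ∈ Set.Icc (0 : ℝ) 1) →
      ganObjective pd p D ≤ ganObjective pd p (fun y => pd y / (pd y + p y)) := by
  intro D hD
  unfold ganObjective
  rw [← Finset.sum_add_distrib, ← Finset.sum_add_distrib]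
  apply Finset.sum_le_sum
  intro y _
  exact ganLogTerm_key (pd y) (p y) (D y) (hpd_nonneg y) (hp_nonneg y) (hpos y)
    (hD y).1 (hD y).2
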